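/- Let B be a symmetric n×n real matrix of rank m with eigendecomposition B = Σ_{i=1}^m ρ_i u_i u_iᵀ, and let U_B be the m×n matrix whose rows are the orthonormal eigenvectors u_iᵀ. Then for any vectors e, s ∈ [−1,1]ⁿ, ‖B(e − s)‖ ≤ ‖B‖ · ‖U_B e − U_B s‖, where ‖B‖ is the spectral norm. Consequently, for any fixed vectors s₁, s₂ ∈ {−1,1}ⁿ, the quadratic form h(e) = (e+s₁)ᵀB(e+s₂) satisfies |h(e) − h(s)| ≤ 4√n · ‖B‖ · ‖U_B e − U_B s‖. -/

import Mathlib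

open Matrix

/-- Euclidean norm of a vector. -/
noncomputable def en {n : ℕ} (v : Fin n → ℝ) : ℝ := Real.sqrt (∑ i, v i ^ 2)

/-- Spectral (operator) norm of a rectangular real matrix. -/
noncomputable def opN {m n : ℕ} (M : Matrix (Fin m) (Fin n) ℝ) : ℝ :=
  ‖LinearMap.toContinuousLinearMap (Matrix.toEuclideanLin M)‖

lemma en_nonneg {n : ℕ} (v : Fin n → ℝ) : 0 ≤ en v := Real.sqrt_nonneg _

lemma en_eq_norm {n : ℕ} (v : Fin n → ℝ) :
    en v = ‖(WithLp.equiv 2 (Fin n → ℝ)).symm v‖ := by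
  rw [EuclideanSpace.norm_eq]
  simp [en, sq_abs]

lemma opN_mulVec {m n : ℕ} (M : Matrix (Fin m) (Fin n) ℝ) (v : Fin n → ℝ) :
    en (M.mulVec v) ≤ opN M * en v := by
  rw [en_eq_norm, en_eq_norm]
  have h := (LinearMap.toContinuousLinearMap (Matrix.toEuclideanLin M)).le_opNorm
    ((WithLp.equiv 2 (Fin n → ℝ)).symm v)
  simpa [opN, Matrix.toLpLin_toLp, Matrix.toLin'_apply] using h

lemma CS {n : ℕ} (x y : Fin n → ℝ) : |dotProduct x y| ≤ en x * en y := by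
  have h := Finset.sum_mul_sq_le_sq_mul_sq Finset.univ x y
  rw [← Real.sqrt_sq_eq_abs]
  unfold en
  rw [← Real.sqrt_mul (Finset.sum_nonneg fun i _ => sq_nonneg _)]
  exact Real.sqrt_le_sqrt h

theorem stmt4 (n m : ℕ) (ρ : Fin m → ℝ) (u : Fin m → Fin n → ℝ)
    (horth : ∀ i j : Fin m, ∑ k, u i k * u j k = if i = j then (1 : ℝ) else 0)
    (B : Matrix (Fin n) (Fin n) ℝ)
    (hB : B = ∑ i, ρ i • vecMulVec (u i) (u i))
    (UB : Matrix (Fin m) (Fin n) ℝ) (hUB : ∀ i, UB i = u i)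
    (s₁ s₂ : Fin n → ℝ) (hs₁ : ∀ i, s₁ i = 1 ∨ s₁ i = -1) (hs₂ : ∀ i, s₂ i = 1 ∨ s₂ i = -1)
    (e s : Fin n → ℝ) (he : ∀ i, e i ∈ Set.Icc (-1 : ℝ) 1)
    (hs : ∀ i, s i ∈ Set.Icc (-1 : ℝ) 1) :
    en (B.mulVec (e - s)) ≤ opN B * en (UB.mulVec e - UB.mulVec s) ∧
    |dotProduct (e + s₁) (B.mulVec (e + s₂)) - dotProduct (s + s₁) (B.mulVec (s + s₂))|
      ≤ 4 * Real.sqrt n * opN B * en (UB.mulVec e - UB.mulVec s) := by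
  set c : Fin m → ℝ := fun i => ∑ k, u i k * (e k - s k) with hc
  -- B.mulVec formula
  have hBv : ∀ w : Fin n → ℝ, B.mulVec w = fun j => ∑ i, ρ i * (∑ k, u i k * w k) * u i j := by
    intro w; funext j
    rw [hB]
    simp only [mulVec, dotProduct, Matrix.sum_apply, Matrix.smul_apply, vecMulVec_apply,
      smul_eq_mul, Finset.sum_mul]
    rw [Finset.sum_comm]
    refine Finset.sum_congr rfl fun i _ => ?_
    rw [Finset.mul_sum, Finset.sum_mul]
    exact Finset.sum_congr rfl fun k _ => by ring
  -- key orthonormality identity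
  have key : ∀ a : Fin m → ℝ, ∑ j, (∑ i, a i * u i j) ^ 2 = ∑ i, a i ^ 2 := by
    intro a
    have h1 : ∀ j, (∑ i, a i * u i j) ^ 2
        = ∑ i, ∑ i', (a i * a i') * (u i j * u i' j) := by
      intro j
      rw [sq, Finset.sum_mul_sum]
      exact Finset.sum_congr rfl fun i _ => Finset.sum_congr rfl fun i' _ => by ring
    simp_rw [h1]
    rw [Finset.sum_comm]
    have h2 : ∀ i, ∑ j, ∑ i', (a i * a i') * (u i j * u i' j)
        = ∑ i', (a i * a i') * ∑ j, u i j * u i' j := by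
      intro i
      rw [Finset.sum_comm]
      exact Finset.sum_congr rfl fun i' _ => (Finset.mul_sum _ _ _).symm
    simp_rw [h2, horth]
    simp [sq]
  have hopN : 0 ≤ opN B := norm_nonneg _
  -- |ρ i| ≤ opN B
  have hui : ∀ i, B.mulVec (u i) = fun j => ρ i * u i j := by
    intro i
    rw [hBv]
    funext j
    simp_rw [horth]
    simp
  have heni : ∀ i, en (u i) = 1 := by
    intro i
    unfold en
    rw [show ∑ k, u i k ^ 2 = 1 by simpa [sq] using horth i i]
    exact Real.sqrt_one
  have hρ : ∀ i, |ρ i| ≤ opN B := by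
    intro i
    have h1 := opN_mulVec B (u i)
    rw [heni, mul_one, hui] at h1
    have h2 : en (fun j => ρ i * u i j) = |ρ i| := by
      unfold en
      simp_rw [mul_pow, ← Finset.mul_sum]
      rw [show ∑ k, u i k ^ 2 = 1 by simpa [sq] using horth i i, mul_one,
        Real.sqrt_sq_eq_abs]
    rwa [h2] at h1
  -- UB difference
  have hU : UB.mulVec e - UB.mulVec s = c := by
    funext i
    simp only [Pi.sub_apply, mulVec, dotProduct, hUB, hc, ← Finset.sum_sub_distrib]
    exact Finset.sum_congr rfl fun k _ => by ring
  have hBes : B.mulVec (e - s) = fun j => ∑ i, (ρ i * c i) * u i j := by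
    rw [hBv]
    funext j
    exact Finset.sum_congr rfl fun i _ => by simp [hc, Pi.sub_apply, mul_assoc]
  have hensq : en (B.mulVec (e - s)) = Real.sqrt (∑ i, (ρ i * c i) ^ 2) := by
    rw [hBes]; unfold en; rw [key]
  have part1 : en (B.mulVec (e - s)) ≤ opN B * en (UB.mulVec e - UB.mulVec s) := by
    rw [hU, hensq]
    have hsum : ∑ i, (ρ i * c i) ^ 2 ≤ opN B ^ 2 * ∑ i, c i ^ 2 := by
      rw [Finset.mul_sum]
      refine Finset.sum_le_sum fun i _ => ?_
      rw [mul_pow]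
      have : ρ i ^ 2 ≤ opN B ^ 2 := by
        rw [← sq_abs]
        exact pow_le_pow_left₀ (abs_nonneg _) (hρ i) 2
      exact mul_le_mul_of_nonneg_right this (sq_nonneg _)
    calc Real.sqrt (∑ i, (ρ i * c i) ^ 2) ≤ Real.sqrt (opN B ^ 2 * ∑ i, c i ^ 2) :=
          Real.sqrt_le_sqrt hsum
      _ = opN B * en c := by
          rw [Real.sqrt_mul (sq_nonneg _), Real.sqrt_sq hopN]; rfl
  refine ⟨part1, ?_⟩
  -- symmetry of the bilinear form
  have hdot : ∀ x y : Fin n → ℝ, dotProduct x (B.mulVec y)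
      = ∑ i, ρ i * (∑ k, u i k * x k) * (∑ k, u i k * y k) := by
    intro x y
    rw [hBv]
    simp only [dotProduct]
    simp_rw [Finset.mul_sum]
    rw [Finset.sum_comm]
    refine Finset.sum_congr rfl fun i _ => ?_
    simp_rw [Finset.sum_mul, Finset.mul_sum]
    rw [Finset.sum_comm]
    exact Finset.sum_congr rfl fun j _ => Finset.sum_congr rfl fun k _ => by ring
  have hsymm : ∀ x y : Fin n → ℝ, dotProduct x (B.mulVec y) = dotProduct y (B.mulVec x) := by
    intro x y
    rw [hdot, hdot]
    exact Finset.sum_congr rfl fun i _ => by ring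
  have split : dotProduct (e + s₁) (B.mulVec (e + s₂)) - dotProduct (s + s₁) (B.mulVec (s + s₂))
      = dotProduct (e + s₂) (B.mulVec (e - s)) + dotProduct (s + s₁) (B.mulVec (e - s)) := by
    rw [hsymm (e + s₂)]
    simp only [mulVec_sub, mulVec_add, sub_dotProduct, add_dotProduct, dotProduct_sub,
      dotProduct_add]
    ring
  -- norm bounds on e + s₂ and s + s₁
  have hbd : ∀ (x y : Fin n → ℝ), (∀ i, x i ∈ Set.Icc (-1:ℝ) 1) → (∀ i, y i = 1 ∨ y i = -1) →
      en (x + y) ≤ 2 * Real.sqrt n := by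
    intro x y hx hy
    have h1 : ∑ i, (x i + y i) ^ 2 ≤ ∑ _i : Fin n, (4:ℝ) := by
      refine Finset.sum_le_sum fun i _ => ?_
      have := hx i
      rcases hy i with h | h <;> simp only [Set.mem_Icc] at this <;> nlinarith [this.1, this.2]
    have h2 : en (x + y) ≤ Real.sqrt (∑ _i : Fin n, (4:ℝ)) := Real.sqrt_le_sqrt h1
    calc en (x + y) ≤ Real.sqrt (∑ _i : Fin n, (4:ℝ)) := h2
      _ = Real.sqrt (4 * n) := by
          rw [Finset.sum_const]
          simp [mul_comm]
      _ = 2 * Real.sqrt n := by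
          have h4 : Real.sqrt 4 = 2 := by
            rw [show (4:ℝ) = 2 ^ 2 by norm_num, Real.sqrt_sq (by norm_num : (0:ℝ) ≤ 2)]
          rw [Real.sqrt_mul (by norm_num : (0:ℝ) ≤ 4), h4]
  have hb1 : en (e + s₂) ≤ 2 * Real.sqrt n := hbd e s₂ he hs₂
  have hb2 : en (s + s₁) ≤ 2 * Real.sqrt n := hbd s s₁ hs hs₁
  have hBesn : 0 ≤ en (B.mulVec (e - s)) := en_nonneg _
  have hsq : 0 ≤ Real.sqrt n := Real.sqrt_nonneg _
  have hcs1 := CS (e + s₂) (B.mulVec (e - s))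
  have hcs2 := CS (s + s₁) (B.mulVec (e - s))
  rw [split]
  have htri : |dotProduct (e + s₂) (B.mulVec (e - s)) + dotProduct (s + s₁) (B.mulVec (e - s))|
      ≤ |dotProduct (e + s₂) (B.mulVec (e - s))| + |dotProduct (s + s₁) (B.mulVec (e - s))| :=
    abs_add_le _ _
  have h1 : |dotProduct (e + s₂) (B.mulVec (e - s))| ≤ 2 * Real.sqrt n * en (B.mulVec (e - s)) :=
    hcs1.trans (mul_le_mul_of_nonneg_right hb1 hBesn)
  have h2 : |dotProduct (s + s₁) (B.mulVec (e - s))| ≤ 2 * Real.sqrt n * en (B.mulVec (e - s)) :=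
    hcs2.trans (mul_le_mul_of_nonneg_right hb2 hBesn)
  have h3 : 4 * Real.sqrt n * en (B.mulVec (e - s))
      ≤ 4 * Real.sqrt n * (opN B * en (UB.mulVec e - UB.mulVec s)) :=
    mul_le_mul_of_nonneg_left part1 (by positivity)
  calc |dotProduct (e + s₂) (B.mulVec (e - s)) + dotProduct (s + s₁) (B.mulVec (e - s))|
      ≤ _ + _ := htri
    _ ≤ 4 * Real.sqrt n * en (B.mulVec (e - s)) := by linarith
    _ ≤ 4 * Real.sqrt n * (opN B * en (UB.mulVec e - UB.mulVec s)) := h3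
    _ = 4 * Real.sqrt n * opN B * en (UB.mulVec e - UB.mulVec s) := (mul_assoc _ _ _).symm
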